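/- For every proof-relevant MLC-frame, the strong endofunctor ◇ of Psh(W) = W ⥤ Type is a strong monad: point (given by point_{P,w}(p) = (w, reflR w, p)) and join (given by join_{P,w}(v, m, (v', m', p)) = (v', transR m m', p)) are strong natural transformations, join is associative, and the monad unit laws hold: join_P ∘ ◇(point_P) = id_{◇P} and join_P ∘ point_{◇P} = id_{◇P} for every presheaf P. -/

import Mathlib

open CategoryTheory

/-- A proof-relevant SLC-frame: a category `W` of worlds, a proof-relevant
modal relation `R`, an inclusion `incl` of `R` into the morphisms of `W`, and
a forward-confluence operation `factor` (split into the resulting world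
`factorW`, the modal proof `factor₁` and the intuitionistic proof `factor₂`),
subject to the coherence laws. -/
structure SLCFrame where
  W : Type
  [instCat : Category.{0} W]
  R : W → W → Type
  incl : ∀ {w v : W}, R w v → (w ⟶ v)
  factorW : ∀ {w w' v : W}, (w ⟶ w') → R w v → W
  factor₁ : ∀ {w w' v : W} (i : w ⟶ w') (m : R w v), R w' (factorW i m)
  factor₂ : ∀ {w w' v : W} (i : w ⟶ w') (m : R w v), v ⟶ factorW i m
  factorW_id : ∀ {w v : W} (m : R w v), factorW (𝟙 w) m = v
  factor₁_id : ∀ {w v : W} (m : R w v), HEq (factor₁ (𝟙 w) m) m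
  factor₂_id : ∀ {w v : W} (m : R w v), HEq (factor₂ (𝟙 w) m) (𝟙 v)
  factorW_comp : ∀ {w w' w'' v : W} (i : w ⟶ w') (j : w' ⟶ w'') (m : R w v),
    factorW (i ≫ j) m = factorW j (factor₁ i m)
  factor₁_comp : ∀ {w w' w'' v : W} (i : w ⟶ w') (j : w' ⟶ w'') (m : R w v),
    HEq (factor₁ (i ≫ j) m) (factor₁ j (factor₁ i m))
  factor₂_comp : ∀ {w w' w'' v : W} (i : w ⟶ w') (j : w' ⟶ w'') (m : R w v),
    HEq (factor₂ (i ≫ j) m) (factor₂ i m ≫ factor₂ j (factor₁ i m))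
  incl_natural : ∀ {w w' v : W} (i : w ⟶ w') (m : R w v),
    incl m ≫ factor₂ i m = i ≫ incl (factor₁ i m)

attribute [instance] SLCFrame.instCat

variable (F : SLCFrame)

/-- The object part of the presheaf `◇P`: `(◇P)(w) = Σ v, (w R v) × P(v)`. -/
def DiaObj (P : F.W ⥤ Type) (w : F.W) : Type :=
  Σ v : F.W, F.R w v × P.obj v

/-- Transport of `◇P` along `i : w ⟶ w'`, via `factor`. -/
def DiaMap (P : F.W ⥤ Type) {w w' : F.W} (i : w ⟶ w') :
    DiaObj F P w → DiaObj F P w' :=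
  fun x => ⟨F.factorW i x.2.1, F.factor₁ i x.2.1, P.map (F.factor₂ i x.2.1) x.2.2⟩

/-- The action of `◇` on a natural transformation `f : P ⟶ Q`, componentwise. -/
def DiaHom {P Q : F.W ⥤ Type} (f : P ⟶ Q) (w : F.W) :
    DiaObj F P w → DiaObj F Q w :=
  fun x => ⟨x.1, x.2.1, f.app x.1 x.2.2⟩

/-- The pointwise product of presheaves. -/
def ProdPsh (P Q : F.W ⥤ Type) : F.W ⥤ Type where
  obj w := P.obj w × Q.obj w
  map i := TypeCat.ofHom (fun x => (P.map i x.1, Q.map i x.2))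
  map_id := by intro w; ext x <;> simp
  map_comp := by intro w w' w'' i j; ext x <;> simp

/-- The terminal (unit) presheaf. -/
def UnitPsh : F.W ⥤ Type where
  obj _ := PUnit
  map _ := TypeCat.ofHom (fun x => x)

/-- The strength map `σ_{P,Q,w} : P(w) × (◇Q)(w) → (◇(P × Q))(w)`. -/
def Strength (P Q : F.W ⥤ Type) (w : F.W) :
    P.obj w × DiaObj F Q w → DiaObj F (ProdPsh F P Q) w :=
  fun x => ⟨x.2.1, x.2.2.1, (P.map (F.incl x.2.2.1) x.1, x.2.2.2)⟩

/-- A proof-relevant MLC-frame: an SLC-frame further equipped with reflexivity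
`reflR` and transitivity `transR` for `R`, coherent with `factor` and `incl`,
with `reflR` a two-sided unit for `transR`. -/
structure MLCFrame extends SLCFrame where
  reflR : ∀ w : W, R w w
  transR : ∀ {u v w : W}, R u v → R v w → R u w
  factorW_refl : ∀ {w w' : W} (i : w ⟶ w'), factorW i (reflR w) = w'
  factor₁_refl : ∀ {w w' : W} (i : w ⟶ w'), HEq (factor₁ i (reflR w)) (reflR w')
  factor₂_refl : ∀ {w w' : W} (i : w ⟶ w'), HEq (factor₂ i (reflR w)) i
  incl_refl : ∀ w : W, incl (reflR w) = 𝟙 w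
  factorW_trans : ∀ {w w' u v : W} (i : w ⟶ w') (m₁ : R w u) (m₂ : R u v),
    factorW i (transR m₁ m₂) = factorW (factor₂ i m₁) m₂
  factor₁_trans : ∀ {w w' u v : W} (i : w ⟶ w') (m₁ : R w u) (m₂ : R u v),
    HEq (factor₁ i (transR m₁ m₂))
        (transR (factor₁ i m₁) (factor₁ (factor₂ i m₁) m₂))
  factor₂_trans : ∀ {w w' u v : W} (i : w ⟶ w') (m₁ : R w u) (m₂ : R u v),
    HEq (factor₂ i (transR m₁ m₂)) (factor₂ (factor₂ i m₁) m₂)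
  transR_assoc : ∀ {u v w x : W} (m₁ : R u v) (m₂ : R v w) (m₃ : R w x),
    transR (transR m₁ m₂) m₃ = transR m₁ (transR m₂ m₃)
  incl_trans : ∀ {u v w : W} (m₁ : R u v) (m₂ : R v w),
    incl (transR m₁ m₂) = incl m₁ ≫ incl m₂
  transR_refl_left : ∀ {w v : W} (m : R w v), transR (reflR w) m = m
  transR_refl_right : ∀ {w v : W} (m : R w v), transR m (reflR v) = m

/-- The object part of `◇◇P`. -/
def Dia2Obj (F : SLCFrame) (P : F.W ⥤ Type) (w : F.W) : Type :=
  Σ v : F.W, F.R w v × DiaObj F P v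

/-- Transport of `◇◇P` along `i : w ⟶ w'`. -/
def Dia2Map (F : SLCFrame) (P : F.W ⥤ Type) {w w' : F.W} (i : w ⟶ w') :
    Dia2Obj F P w → Dia2Obj F P w' :=
  fun x => ⟨F.factorW i x.2.1, F.factor₁ i x.2.1, DiaMap F P (F.factor₂ i x.2.1) x.2.2⟩

/-- The object part of `◇◇◇P`. -/
def Dia3Obj (F : SLCFrame) (P : F.W ⥤ Type) (w : F.W) : Type :=
  Σ v : F.W, F.R w v × Dia2Obj F P v

/-- The point map `point_{P,w} : P(w) → (◇P)(w)`. -/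
def Point (F : MLCFrame) (P : F.W ⥤ Type) (w : F.W) :
    P.obj w → DiaObj F.toSLCFrame P w :=
  fun p => ⟨w, F.reflR w, p⟩

/-- The join map `join_{P,w} : (◇◇P)(w) → (◇P)(w)`. -/
def Join (F : MLCFrame) (P : F.W ⥤ Type) (w : F.W) :
    Dia2Obj F.toSLCFrame P w → DiaObj F.toSLCFrame P w :=
  fun x => ⟨x.2.2.1, F.transR x.2.1 x.2.2.2.1, x.2.2.2.2⟩

/-- Extensionality for `DiaObj`. -/
theorem diaObj_ext {F : SLCFrame} {P : F.W ⥤ Type} {w : F.W}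
    {v v' : F.W} (h : v = v') {m : F.R w v} {m' : F.R w v'}
    {p : P.obj v} {p' : P.obj v'} (hm : HEq m m') (hp : HEq p p') :
    (⟨v, m, p⟩ : DiaObj F P w) = ⟨v', m', p'⟩ := by
  subst h; cases hm; cases hp; rfl

/-- `P.map` respects heterogeneous equality of morphisms. -/
theorem mapHEq {F : SLCFrame} (P : F.W ⥤ Type) {a b b' : F.W} (h : b = b')
    (f : a ⟶ b) (f' : a ⟶ b') (hf : HEq f f') (x : P.obj a) :
    HEq (P.map f x) (P.map f' x) := by
  subst h; cases hf; rfl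

/-- for every proof-relevant MLC-frame, the strong endofunctor `◇`
of `W ⥤ Type` is a strong monad: `point` and `join` are strong natural
transformations, `join` is associative, and the monad unit laws hold. -/
theorem dia_strong_monad (F : MLCFrame) :
    -- point_P is a natural transformation P ⟶ ◇P (naturality in w)
    (∀ (P : F.W ⥤ Type) {w w' : F.W} (i : w ⟶ w') (p : P.obj w),
       DiaMap F.toSLCFrame P i (Point F P w p) = Point F P w' (P.map i p)) ∧
    -- point is natural in P
    (∀ (P Q : F.W ⥤ Type) (f : P ⟶ Q) (w : F.W) (p : P.obj w),
       DiaHom F.toSLCFrame f w (Point F P w p) = Point F Q w (f.app w p)) ∧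
    -- point is strong: σ_{P,Q} ∘ (id_P × point_Q) = point_{P×Q}
    (∀ (P Q : F.W ⥤ Type) (w : F.W) (x : P.obj w × Q.obj w),
       Strength F.toSLCFrame P Q w (x.1, Point F Q w x.2) =
         Point F (ProdPsh F.toSLCFrame P Q) w x) ∧
    -- join_P is a natural transformation ◇◇P ⟶ ◇P (naturality in w)
    (∀ (P : F.W ⥤ Type) {w w' : F.W} (i : w ⟶ w') (x : Dia2Obj F.toSLCFrame P w),
       DiaMap F.toSLCFrame P i (Join F P w x) = Join F P w' (Dia2Map F.toSLCFrame P i x)) ∧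
    -- join is natural in P
    (∀ (P Q : F.W ⥤ Type) (f : P ⟶ Q) (w : F.W) (x : Dia2Obj F.toSLCFrame P w),
       DiaHom F.toSLCFrame f w (Join F P w x) =
         Join F Q w ⟨x.1, x.2.1, DiaHom F.toSLCFrame f x.1 x.2.2⟩) ∧
    -- join is associative: join_P ∘ join_{◇P} = join_P ∘ ◇(join_P)
    (∀ (P : F.W ⥤ Type) (w : F.W) (x : Dia3Obj F.toSLCFrame P w),
       Join F P w ⟨x.2.2.1, F.transR x.2.1 x.2.2.2.1, x.2.2.2.2⟩ =
         Join F P w ⟨x.1, x.2.1, Join F P x.1 x.2.2⟩) ∧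
    -- join is strong: join_{P×Q} ∘ ◇(σ_{P,Q}) ∘ σ_{P,◇Q} = σ_{P,Q} ∘ (id_P × join_Q)
    (∀ (P Q : F.W ⥤ Type) (w : F.W) (p : P.obj w) (x : Dia2Obj F.toSLCFrame Q w),
       Join F (ProdPsh F.toSLCFrame P Q) w
         ⟨x.1, x.2.1, Strength F.toSLCFrame P Q x.1 (P.map (F.incl x.2.1) p, x.2.2)⟩ =
         Strength F.toSLCFrame P Q w (p, Join F Q w x)) ∧
    -- monad unit laws: join_P ∘ ◇(point_P) = id and join_P ∘ point_{◇P} = id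
    (∀ (P : F.W ⥤ Type) (w : F.W) (x : DiaObj F.toSLCFrame P w),
       Join F P w ⟨x.1, x.2.1, Point F P x.1 x.2.2⟩ = x) ∧
    (∀ (P : F.W ⥤ Type) (w : F.W) (x : DiaObj F.toSLCFrame P w),
       Join F P w ⟨w, F.reflR w, x⟩ = x) := by
  refine ⟨?_, ?_, ?_, ?_, ?_, ?_, ?_, ?_, ?_⟩
  · intro P w w' i p
    exact diaObj_ext (F.factorW_refl i) (F.factor₁_refl i)
      (mapHEq P (F.factorW_refl i) _ _ (F.factor₂_refl i) p)
  · intro P Q f w p; rfl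
  · intro P Q w x
    simp [Strength, Point, F.incl_refl, ProdPsh]
    rfl
  · intro P w w' i x
    obtain ⟨u, m₁, v, m₂, p⟩ := x
    exact diaObj_ext (F.factorW_trans i m₁ m₂) (F.factor₁_trans i m₁ m₂)
      (mapHEq P (F.factorW_trans i m₁ m₂) _ _ (F.factor₂_trans i m₁ m₂) p)
  · intro P Q f w x; rfl
  · intro P w x
    obtain ⟨u, m₁, v, m₂, y⟩ := x
    simp [_root_.Join, F.transR_assoc]
    rfl
  · intro P Q w p x
    obtain ⟨u, m₁, v, m₂, q⟩ := x
    simp [_root_.Join, Strength, F.incl_trans, ProdPsh, FunctorToTypes.map_comp_apply]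
    rfl
  · intro P w x
    obtain ⟨v, m, p⟩ := x
    simp [_root_.Join, Point, F.transR_refl_right]
    rfl
  · intro P w x
    obtain ⟨v, m, p⟩ := x
    simp [_root_.Join, F.transR_refl_left]
    rfl
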